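/- arXiv:math-ph/0007015 — 4 statements merged into one kernel-verified Lean document; each statement's English description precedes it below -/
import Mathlib

section
/- The Barnes zeta function ζ_B(s,a) = Σ_{m⃗∈ℕ₀^d}(a+|m⃗|)^{-s} has residue at s = d equal to 1/(d-1)!, and residue at s = d-1 equal to (d-2a)/(2(d-2)!). -/
open Filter Topology

open Complex Polynomial Finset HurwitzZeta


lemma barnes_ne_zero_aux {b : ℝ} (hb0 : 0 < b) (n : ℕ) : ((n : ℂ) + (b : ℂ)) ≠ 0 := by
  have h : (0:ℝ) < (n : ℝ) + b := by positivity
  rw [show ((n:ℂ) + (b:ℂ)) = (((n:ℝ) + b : ℝ) : ℂ) by push_cast; ring]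
  exact_mod_cast h.ne'

noncomputable def barnesHH (b : ℝ) (m : ℕ) (s : ℂ) : ℂ :=
  hurwitzZeta (b : UnitAddCircle) s - ∑ n ∈ Finset.range m, ((n : ℂ) + b) ^ (-s)

lemma barnesHH_hasSum {b : ℝ} (hb0 : 0 < b) (hb1 : b ≤ 1) (m : ℕ) {s : ℂ} (hs : 1 < s.re) :
    HasSum (fun n : ℕ => ((n : ℂ) + (((m : ℝ) + b : ℝ) : ℂ)) ^ (-s)) (barnesHH b m s) := by
  have h0 := hasSum_hurwitzZeta_of_one_lt_re (Set.mem_Icc.mpr ⟨hb0.le, hb1⟩) hs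
  have h1 : HasSum (fun n : ℕ => ((n : ℂ) + b) ^ (-s)) (hurwitzZeta b s) := by
    refine h0.congr_fun fun n => ?_
    rw [Complex.cpow_neg, one_div]
  have h2 := (hasSum_nat_add_iff' (f := fun n : ℕ => ((n : ℂ) + (b:ℂ)) ^ (-s)) m).mpr h1
  refine h2.congr_fun fun n => ?_
  congr 1
  push_cast
  ring

lemma barnesHH_diff {b : ℝ} (hb0 : 0 < b) (m : ℕ) {s : ℂ} (hs : s ≠ 1) :
    DifferentiableAt ℂ (barnesHH b m) s := by
  refine DifferentiableAt.sub (differentiableAt_hurwitzZeta _ hs) ?_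
  refine DifferentiableAt.fun_sum fun n _ => ?_
  exact DifferentiableAt.const_cpow (differentiableAt_id.neg) (Or.inl (barnes_ne_zero_aux hb0 n))

lemma barnesHH_res {b : ℝ} (hb0 : 0 < b) (m : ℕ) :
    Tendsto (fun s => (s - 1) * barnesHH b m s) (𝓝[≠] 1) (𝓝 1) := by
  have h1 := hurwitzZeta_residue_one (b : UnitAddCircle)
  have h2 : Tendsto (fun s : ℂ => (s - 1) * ∑ n ∈ Finset.range m, ((n : ℂ) + b) ^ (-s))
      (𝓝[≠] 1) (𝓝 0) := by
    have hd : ∀ s : ℂ, DifferentiableAt ℂ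
        (fun s : ℂ => (s - 1) * ∑ n ∈ Finset.range m, ((n:ℂ)+b) ^ (-s)) s := by
      intro s
      exact (differentiableAt_id.sub_const 1).mul (DifferentiableAt.fun_sum fun n _ =>
        DifferentiableAt.const_cpow (differentiableAt_id.neg) (Or.inl (barnes_ne_zero_aux hb0 n)))
    have hc := (hd 1).continuousAt.tendsto
    simp only [sub_self, zero_mul] at hc
    exact hc.mono_left nhdsWithin_le_nhds
  have h3 := h1.sub h2
  simp only [sub_zero] at h3
  refine h3.congr fun s => ?_
  simp only [barnesHH]
  ring

lemma barnes_tendsto_sub_punctured (c x : ℂ) :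
    Tendsto (fun s : ℂ => s - c) (𝓝[≠] x) (𝓝[≠] (x - c)) := by
  refine tendsto_nhdsWithin_of_tendsto_nhds_of_eventually_within _ ?_ ?_
  · exact ((continuous_sub_right c).tendsto x).mono_left nhdsWithin_le_nhds
  · filter_upwards [self_mem_nhdsWithin] with s hs
    simp only [Set.mem_compl_iff, Set.mem_singleton_iff] at hs ⊢
    exact fun h => hs (sub_left_inj.mp h)

lemma barnes_prod_aux (n r : ℕ) :
    ∏ k ∈ Finset.range r, (n + k + 1) = Nat.factorial r * (n + r).choose r := by
  induction r with
  | zero => simp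
  | succ r ih =>
    rw [Finset.prod_range_succ, ih, Nat.factorial_succ]
    have h := Nat.add_one_mul_choose_eq (n + r) r
    calc Nat.factorial r * (n + r).choose r * (n + r + 1)
        = Nat.factorial r * ((n + r + 1) * (n + r).choose r) := by ring
      _ = Nat.factorial r * ((n + r + 1).choose (r + 1) * (r + 1)) := by rw [h]
      _ = (r + 1) * Nat.factorial r * (n + (r + 1)).choose (r + 1) := by
          rw [show n + (r + 1) = n + r + 1 by omega]
          ring

/-- The Barnes zeta function ζ_B(s,a) = Σ_{n≥0} C(d+n-1,n)(n+a)^{-s} (d ≥ 2, a > 0),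
meromorphically continued, has residue 1/(d-1)! at s = d and residue
(d-2a)/(2(d-2)!) at s = d-1. -/
theorem barnes_zeta_residues_d_and_d_sub_one (d : ℕ) (hd : 2 ≤ d) (a : ℝ) (ha : 0 < a)
    (f : ℂ → ℂ)
    (hsum : ∀ s : ℂ, (d : ℝ) < s.re →
      HasSum (fun n : ℕ => ((d + n - 1).choose n : ℂ) * ((n : ℂ) + (a : ℂ)) ^ (-s)) (f s))
    (hanal : ∀ s : ℂ, (∀ k : ℕ, 1 ≤ k → k ≤ d → s ≠ (k : ℂ)) → AnalyticAt ℂ f s) :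
    Tendsto (fun s : ℂ => (s - (d : ℂ)) * f s) (𝓝[≠] (d : ℂ))
      (𝓝 (((d - 1).factorial : ℂ)⁻¹)) ∧
    Tendsto (fun s : ℂ => (s - ((d : ℂ) - 1)) * f s) (𝓝[≠] ((d : ℂ) - 1))
      (𝓝 (((d : ℂ) - 2 * (a : ℂ)) / (2 * ((d - 2).factorial : ℂ)))) := by
  classical
  obtain ⟨e, rfl⟩ : ∃ e, d = e + 2 := ⟨d - 2, by omega⟩
  -- decomposition a = m + b with b ∈ (0,1]
  set m : ℕ := ⌈a⌉₊ - 1 with hm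
  set b : ℝ := a - m with hb
  have hceil : 1 ≤ ⌈a⌉₊ := Nat.one_le_ceil_iff.mpr ha
  have hmr : (m : ℝ) = (⌈a⌉₊ : ℝ) - 1 := by
    rw [hm, Nat.cast_sub hceil]; simp
  have hb0 : 0 < b := by
    have h1 : (⌈a⌉₊ : ℝ) < a + 1 := Nat.ceil_lt_add_one ha.le
    rw [hb, hmr]; linarith
  have hb1 : b ≤ 1 := by
    have h1 : a ≤ (⌈a⌉₊ : ℝ) := Nat.le_ceil a
    rw [hb, hmr]; linarith
  have hab : ((m : ℝ) + b : ℝ) = a := by rw [hb]; ring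
  have hne : ∀ n : ℕ, ((n : ℂ) + (a : ℂ)) ≠ 0 := by
    intro n
    have h : (0:ℝ) < (n : ℝ) + a := by positivity
    rw [show ((n:ℂ) + (a:ℂ)) = (((n:ℝ) + a : ℝ) : ℂ) by push_cast; ring]
    exact_mod_cast h.ne'
  -- the polynomial
  set Q : Polynomial ℂ := ∏ k ∈ Finset.range (e+1), (X + C ((k : ℂ) + 1 - (a:ℂ))) with hQ
  have hmon : Q.Monic := monic_prod_of_monic _ _ fun k _ => monic_X_add_C _
  have hdeg : Q.natDegree = e + 1 := by
    rw [hQ, natDegree_prod_of_monic _ _ fun k _ => monic_X_add_C _]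
    simp only [natDegree_X_add_C, Finset.sum_const, Finset.card_range, smul_eq_mul, mul_one]
  have hcoeff_top : Q.coeff (e+1) = 1 := by rw [← hdeg]; exact hmon.coeff_natDegree
  have hcoeff_sub : Q.coeff e = ∑ k ∈ Finset.range (e+1), ((k:ℂ) + 1 - a) := by
    have h := Finset.prod_X_add_C_coeff (Finset.range (e+1))
      (fun k : ℕ => (k:ℂ) + 1 - (a:ℂ)) (k := e) (by simp)
    rw [hQ, h, Finset.card_range, show e + 1 - e = 1 by omega, Finset.powersetCard_one,
      Finset.sum_map]
    simp
  have heval : ∀ n : ℕ, Q.eval ((n:ℂ) + a)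
      = (Nat.factorial (e+1) : ℂ) * ((e + 2 + n - 1).choose n : ℂ) := by
    intro n
    rw [hQ, Polynomial.eval_prod]
    have h1 : ∀ k ∈ Finset.range (e+1),
        Polynomial.eval ((n:ℂ)+a) (X + C ((k:ℂ)+1-(a:ℂ))) = ((n + k + 1 : ℕ) : ℂ) := by
      intro k _
      simp only [eval_add, eval_X, eval_C]
      push_cast; ring
    rw [Finset.prod_congr rfl h1, ← Nat.cast_prod, barnes_prod_aux]
    have hch : (n + (e+1)).choose (e+1) = (e + 2 + n - 1).choose n := by
      rw [show e + 2 + n - 1 = n + (e+1) by omega, Nat.choose_symm_add]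
    rw [hch]
    push_cast; ring
  -- the continued function
  set g : ℂ → ℂ := fun s =>
    (Nat.factorial (e+1) : ℂ)⁻¹ * ∑ j ∈ Finset.range (e + 2), Q.coeff j * barnesHH b m (s - j)
    with hg
  -- equality of f and g on the half-plane Re s > e+2
  have hfg : ∀ s : ℂ, ((e + 2 : ℕ) : ℝ) < s.re → f s = g s := by
    intro s hs
    have hterm : ∀ j ∈ Finset.range (e+2),
        HasSum (fun n : ℕ => Q.coeff j * (((n:ℂ) + a) ^ ((j:ℕ) : ℂ) * ((n:ℂ)+a) ^ (-s)))
          (Q.coeff j * barnesHH b m (s - j)) := by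
      intro j hj
      have hjle : (j:ℝ) ≤ e + 1 := by
        have := Finset.mem_range.mp hj
        exact_mod_cast Nat.lt_succ_iff.mp this
      have hsj : 1 < (s - (j:ℂ)).re := by
        rw [Complex.sub_re, Complex.natCast_re]
        push_cast at hs
        linarith
      have h := barnesHH_hasSum hb0 hb1 m hsj
      rw [hab] at h
      have h2 := h.mul_left (Q.coeff j)
      refine h2.congr_fun fun n => ?_
      congr 1
      rw [← Complex.cpow_add _ _ (hne n)]
      congr 1
      ring
    have hS := hasSum_sum hterm
    have hpt : ∀ n : ℕ,
        ∑ j ∈ Finset.range (e+2), Q.coeff j * (((n:ℂ)+a) ^ ((j:ℕ):ℂ) * ((n:ℂ)+a) ^ (-s))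
          = (Nat.factorial (e+1) : ℂ) * (((e+2+n-1).choose n : ℕ) : ℂ) * ((n:ℂ)+a) ^ (-s) := by
      intro n
      rw [← heval n, Polynomial.eval_eq_sum_range' (n := e + 2) (by rw [hdeg]; omega),
        Finset.sum_mul]
      refine Finset.sum_congr rfl fun j _ => ?_
      rw [Complex.cpow_natCast]
      ring
    have hfact : (Nat.factorial (e+1) : ℂ) ≠ 0 :=
      Nat.cast_ne_zero.mpr (Nat.factorial_ne_zero _)
    have hS2 := (hS.congr_fun fun n => (hpt n).symm).mul_left (Nat.factorial (e+1) : ℂ)⁻¹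
    have hS3 : HasSum (fun n : ℕ => ((e+2+n-1).choose n : ℂ) * ((n:ℂ)+a) ^ (-s)) (g s) := by
      refine hS2.congr_fun fun n => ?_
      field_simp
    exact (hsum s hs).unique hS3
  -- identity theorem on the complement of the poles
  set S : Set ℂ := (fun k : ℕ => (k : ℂ)) '' (Set.Icc 1 (e+2)) with hSdef
  have hSfin : S.Finite := (Set.finite_Icc _ _).image _
  have hU_open : IsOpen Sᶜ := hSfin.isClosed.isOpen_compl
  have hanalU : AnalyticOnNhd ℂ f Sᶜ := by
    intro s hs
    refine hanal s fun k h1 h2 he => hs ⟨k, ⟨h1, h2⟩, he.symm⟩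
  have hganal : AnalyticOnNhd ℂ g Sᶜ := by
    refine DifferentiableOn.analyticOnNhd
      (fun s hs => DifferentiableAt.differentiableWithinAt ?_) hU_open
    rw [hg]
    refine DifferentiableAt.const_mul ?_ _
    refine DifferentiableAt.fun_sum fun j hj => DifferentiableAt.const_mul ?_ _
    have hne1 : s - (j:ℂ) ≠ 1 := by
      intro h
      refine hs ⟨j+1, ⟨by omega, by have := Finset.mem_range.mp hj; omega⟩, ?_⟩
      push_cast
      linear_combination -h
    exact (barnesHH_diff hb0 m hne1).comp s (differentiableAt_id.sub_const _)
  have hpre : IsPreconnected Sᶜ :=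
    (hSfin.countable.isPathConnected_compl_of_one_lt_rank
      (by rw [Complex.rank_real_complex]; norm_num)).isConnected.isPreconnected
  have hz0 : ((e:ℂ) + 3) ∈ Sᶜ := by
    rintro ⟨k, ⟨hk1, hk2⟩, hk⟩
    have h1 : (k:ℂ) = ((e + 3 : ℕ) : ℂ) := by push_cast; exact hk
    have h2 : k = e + 3 := Nat.cast_injective h1
    omega
  have hev : f =ᶠ[𝓝 ((e:ℂ)+3)] g := by
    have hopen : IsOpen {s : ℂ | ((e + 2 : ℕ) : ℝ) < s.re} :=
      isOpen_lt continuous_const Complex.continuous_re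
    have hmem : ((e:ℂ)+3) ∈ {s : ℂ | ((e + 2 : ℕ) : ℝ) < s.re} := by
      simp only [Set.mem_setOf_eq, Complex.add_re, Complex.natCast_re]
      norm_num
    filter_upwards [hopen.mem_nhds hmem] with s hs using hfg s hs
  have heqOn : Set.EqOn f g Sᶜ :=
    hanalU.eqOn_of_preconnected_of_eventuallyEq hganal hpre hz0 hev
  -- the key residue computation
  have hres : ∀ p : ℕ, p < e + 2 →
      Tendsto (fun s : ℂ => (s - ((p:ℂ)+1)) * f s) (𝓝[≠] ((p:ℂ)+1))
        (𝓝 ((Nat.factorial (e+1) : ℂ)⁻¹ * Q.coeff p)) := by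
    intro p hp
    have hev2 : ∀ᶠ s in 𝓝[≠] ((p:ℂ)+1), s ∈ Sᶜ := by
      have hfin2 : (S \ {((p:ℂ)+1)}).Finite := hSfin.diff
      have hop : IsOpen (S \ {((p:ℂ)+1)})ᶜ := hfin2.isClosed.isOpen_compl
      have hxin : ((p:ℂ)+1) ∈ (S \ {((p:ℂ)+1)})ᶜ := fun h => h.2 rfl
      filter_upwards [nhdsWithin_le_nhds (hop.mem_nhds hxin), self_mem_nhdsWithin] with s h1 h2
      exact fun hSs => h1 ⟨hSs, h2⟩
    have hsum_t : Tendsto (fun s : ℂ =>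
        ∑ j ∈ Finset.range (e+2), Q.coeff j * ((s - ((p:ℂ)+1)) * barnesHH b m (s - j)))
        (𝓝[≠] ((p:ℂ)+1)) (𝓝 (Q.coeff p)) := by
      have hval : Q.coeff p = ∑ j ∈ Finset.range (e+2),
          (if j = p then Q.coeff p else 0) := by
        rw [Finset.sum_ite_eq' (Finset.range (e+2)) p fun _ => Q.coeff p]
        simp [Finset.mem_range.mpr hp]
      rw [hval]
      refine tendsto_finset_sum _ fun j hj => ?_
      by_cases hjp : j = p
      · subst hjp
        simp only [if_pos rfl]
        have h1 : Tendsto (fun s : ℂ => s - (j:ℂ)) (𝓝[≠] ((j:ℂ)+1)) (𝓝[≠] 1) := by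
          have h := barnes_tendsto_sub_punctured (j:ℂ) ((j:ℂ)+1)
          simpa using h
        have h2 := (barnesHH_res hb0 m).comp h1
        have h3 := h2.const_mul (Q.coeff j)
        rw [mul_one] at h3
        refine h3.congr fun s => ?_
        simp only [Function.comp]
        ring
      · have hne1 : ((p:ℂ)+1) - (j:ℂ) ≠ 1 := by
          intro h
          have h2 : (p:ℂ) = (j:ℂ) := by linear_combination h
          exact hjp (Nat.cast_injective h2).symm
        have hc : ContinuousAt (fun s : ℂ => barnesHH b m (s - (j:ℂ))) ((p:ℂ)+1) := by
          have hdiff : DifferentiableAt ℂ (fun s : ℂ => barnesHH b m (s - (j:ℂ))) ((p:ℂ)+1) :=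
            DifferentiableAt.comp ((p:ℂ)+1) (barnesHH_diff hb0 m hne1)
              (differentiableAt_id.sub_const _)
          exact hdiff.continuousAt
        have h0 : Tendsto (fun s : ℂ => s - ((p:ℂ)+1)) (𝓝[≠] ((p:ℂ)+1)) (𝓝 0) := by
          have := ((continuous_sub_right ((p:ℂ)+1)).tendsto ((p:ℂ)+1)).mono_left
            (nhdsWithin_le_nhds (s := {((p:ℂ)+1)}ᶜ))
          simpa using this
        have h4 := (h0.mul (hc.tendsto.mono_left nhdsWithin_le_nhds)).const_mul (Q.coeff j)
        rw [if_neg hjp]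
        simpa using h4
    have hgt : Tendsto (fun s : ℂ => (s - ((p:ℂ)+1)) * g s) (𝓝[≠] ((p:ℂ)+1))
        (𝓝 ((Nat.factorial (e+1) : ℂ)⁻¹ * Q.coeff p)) := by
      have h5 := hsum_t.const_mul ((Nat.factorial (e+1) : ℂ)⁻¹)
      refine h5.congr fun s => ?_
      rw [hg]
      simp only [Finset.mul_sum]
      exact Finset.sum_congr rfl fun j _ => by ring
    refine hgt.congr' ?_
    filter_upwards [hev2] with s hs
    rw [heqOn hs]
  constructor
  · have h1 := hres (e+1) (by omega)
    rw [hcoeff_top, mul_one] at h1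
    have hx : (((e+1:ℕ):ℂ)+1) = ((e+2:ℕ):ℂ) := by push_cast; ring
    rw [hx] at h1
    have hfac : (e + 2 - 1) = e + 1 := by omega
    rw [hfac]
    exact h1
  · have hgauss : (∑ k ∈ Finset.range (e+1), ((k:ℂ)+1-(a:ℂ)))
        = ((e:ℂ)+1) * (((e:ℂ)+2) - 2*(a:ℂ)) / 2 := by
      have hsplit : ∑ k ∈ Finset.range (e+1), ((k:ℂ)+1-(a:ℂ))
          = (∑ k ∈ Finset.range (e+1), (k:ℂ)) + ((e:ℂ)+1) * (1 - a) := by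
        rw [Finset.sum_congr rfl (fun (k : ℕ) _ => show ((k:ℂ)+1-(a:ℂ)) = (k:ℂ) + (1 - a) by ring),
          Finset.sum_add_distrib, Finset.sum_const, Finset.card_range]
        ring
      have hid : (∑ k ∈ Finset.range (e+1), (k:ℂ)) = ((e:ℂ)+1) * (e:ℂ) / 2 := by
        have h2' : (∑ i ∈ Finset.range (e+1), i) * 2 = (e+1) * e := by
          simpa using Finset.sum_range_id_mul_two (e+1)
        have h3 : ((∑ i ∈ Finset.range (e+1), i : ℕ) : ℂ) * 2 = ((e:ℂ)+1) * (e:ℂ) := by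
          exact_mod_cast h2'
        rw [← Nat.cast_sum]
        linear_combination h3 / 2
      rw [hsplit, hid]
      ring
    have hfacC : ((Nat.factorial (e+1) : ℕ) : ℂ) = ((e:ℂ)+1) * ((Nat.factorial e : ℕ) : ℂ) := by
      rw [Nat.factorial_succ]; push_cast; ring
    have hF : ((Nat.factorial e : ℕ) : ℂ) ≠ 0 := Nat.cast_ne_zero.mpr (Nat.factorial_ne_zero _)
    have hE : ((e:ℂ)+1) ≠ 0 := Nat.cast_add_one_ne_zero e
    have h2 := hres e (by omega)
    have hval2 : (Nat.factorial (e+1) : ℂ)⁻¹ * Q.coeff e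
        = (((e+2:ℕ):ℂ) - 2*(a:ℂ)) / (2 * ((Nat.factorial (e+2-2) : ℕ) : ℂ)) := by
      rw [hcoeff_sub, hgauss, show e + 2 - 2 = e from by omega, hfacC]
      push_cast
      field_simp
    rw [hval2] at h2
    rw [show ((e+2:ℕ):ℂ) - 1 = (e:ℂ) + 1 by push_cast; ring]
    exact h2
end

section
/- The Barnes zeta function ζ_B(s,a) = Σ_{n≥0} C(d+n-1,n)(n+a)^{-s} (with d ≥ 3) has residue at s = d-2 equal to (12a² - d - 12ad + 3d²)/(24(d-3)!). -/
open Filter Topology Polynomial Finset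

namespace BarnesResAux

noncomputable def E1 (a : ℝ) (m : ℕ) : ℂ := m * (m + 1) / 2 - m * a

noncomputable def E2 (a : ℝ) (m : ℕ) : ℂ :=
  ((m : ℂ) * (m + 1) / 2 - m * a) ^ 2 / 2
    - ((m : ℂ) * (m + 1) * (2 * m + 1) / 6 - a * m * (m + 1) + m * (a : ℂ) ^ 2) / 2

noncomputable def Q (a : ℝ) (m : ℕ) : ℂ[X] := ∏ i ∈ Finset.range m, (X + C ((i : ℂ) + 1 - a))

lemma Q_monic (a : ℝ) (m : ℕ) : (Q a m).Monic :=
  monic_prod_of_monic _ _ fun i _ => monic_X_add_C _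

lemma Q_natDegree (a : ℝ) (m : ℕ) : (Q a m).natDegree = m := by
  rw [Q, natDegree_prod_of_monic _ _ fun i _ => monic_X_add_C _]
  simp only [natDegree_X_add_C]
  simp

lemma Q_coeff_top (a : ℝ) (m : ℕ) : (Q a m).coeff m = 1 := by
  have := (Q_monic a m).leadingCoeff
  rwa [leadingCoeff, Q_natDegree] at this

lemma Q_succ (a : ℝ) (m : ℕ) : Q a (m + 1) = Q a m * (X + C ((m : ℂ) + 1 - a)) :=
  prod_range_succ _ _

lemma coeff_mul_linear (p : ℂ[X]) (c : ℂ) (k : ℕ) :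
    (p * (X + C c)).coeff (k + 1) = p.coeff k + c * p.coeff (k + 1) := by
  rw [mul_add, coeff_add, coeff_mul_X, coeff_mul_C]
  ring

lemma Q_coeff_sub_one (a : ℝ) : ∀ m : ℕ, (Q a (m + 1)).coeff m = E1 a (m + 1) := by
  intro m
  induction m with
  | zero =>
    rw [show (0 : ℕ) + 1 = 1 from rfl]
    simp only [Q, Finset.prod_range_one, Nat.cast_zero]
    rw [coeff_add, coeff_X_zero, coeff_C]
    norm_num [E1]
  | succ m ih =>
    rw [Q_succ, coeff_mul_linear, ih, Q_coeff_top, E1, E1]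
    push_cast
    ring

lemma Q_coeff_sub_two (a : ℝ) : ∀ m : ℕ, (Q a (m + 2)).coeff m = E2 a (m + 2) := by
  intro m
  induction m with
  | zero =>
    rw [show (0 : ℕ) + 2 = 1 + 1 by rfl, Q_succ]
    rw [coeff_zero_eq_eval_zero]
    simp only [Q, Finset.prod_range_one, Nat.cast_zero, eval_mul, eval_add, eval_X, eval_C, E2]
    push_cast
    ring
  | succ m ih =>
    rw [show m + 1 + 2 = (m + 2) + 1 by ring, Q_succ, coeff_mul_linear, ih,
      show m + 2 = (m + 1) + 1 by ring, Q_coeff_sub_one, E1, E2, E2]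
    push_cast
    ring

lemma Q_eval (a : ℝ) (m : ℕ) (z : ℂ) :
    (Q a m).eval z = ∏ i ∈ Finset.range m, (z + ((i : ℂ) + 1 - a)) := by
  simp [Q, eval_prod]

lemma asc_prod (n : ℕ) : ∀ k : ℕ, (n + 1).ascFactorial k = ∏ i ∈ Finset.range k, (n + 1 + i) := by
  intro k
  induction k with
  | zero => simp
  | succ k ih => rw [Nat.ascFactorial_succ, prod_range_succ, ih, mul_comm]

lemma choose_prod (d n : ℕ) (hd : 1 ≤ d) :
    (d + n - 1).choose n * (d - 1).factorial = ∏ i ∈ Finset.range (d - 1), (n + 1 + i) := by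
  rw [← asc_prod, Nat.ascFactorial_eq_factorial_mul_choose]
  have h1 : d + n - 1 = n + (d - 1) := by omega
  have h2 : (n + (d - 1)).choose n = (n + (d - 1)).choose (d - 1) := by
    have := Nat.choose_symm (n := n + (d - 1)) (k := d - 1) (by omega)
    simpa [show n + (d - 1) - (d - 1) = n by omega] using this
  rw [h1, h2, mul_comm]

end BarnesResAux

open BarnesResAux

/-- The Barnes zeta function ζ_B(s,a) = Σ_{n≥0} C(d+n-1,n)(n+a)^{-s} (d ≥ 3, a > 0)
has residue (12a² - d - 12ad + 3d²)/(24(d-3)!) at s = d-2. -/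
theorem barnes_zeta_residue_d_sub_two (d : ℕ) (hd : 3 ≤ d) (a : ℝ) (ha : 0 < a)
    (f : ℂ → ℂ)
    (hsum : ∀ s : ℂ, (d : ℝ) < s.re →
      HasSum (fun n : ℕ => ((d + n - 1).choose n : ℂ) * ((n : ℂ) + (a : ℂ)) ^ (-s)) (f s))
    (hanal : ∀ s : ℂ, (∀ k : ℕ, 1 ≤ k → k ≤ d → s ≠ (k : ℂ)) → AnalyticAt ℂ f s) :
    Tendsto (fun s : ℂ => (s - ((d : ℂ) - 2)) * f s) (𝓝[≠] ((d : ℂ) - 2))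
      (𝓝 ((12 * (a : ℂ) ^ 2 - (d : ℂ) - 12 * (a : ℂ) * (d : ℂ) + 3 * (d : ℂ) ^ 2) /
        (24 * ((d - 3).factorial : ℂ)))) := by
  obtain ⟨e, rfl⟩ : ∃ e, d = e + 3 := ⟨d - 3, by omega⟩
  clear hd
  set m : ℕ := e + 2 with hm
  set b : ℝ := Int.fract a with hbdef
  have hb : b ∈ Set.Icc (0 : ℝ) 1 := ⟨Int.fract_nonneg a, (Int.fract_lt_one a).le⟩
  set N : ℕ := ⌊a⌋₊ with hNdef
  have hNb : (N : ℝ) + b = a := by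
    rw [hNdef, natCast_floor_eq_intCast_floor ha.le, hbdef, Int.fract]
    ring
  set c : ℕ → ℂ := fun j => (Q a m).coeff j / (m.factorial : ℂ) with hc
  set h : ℕ → ℂ → ℂ := fun j s => ∑ k ∈ Finset.range N,
    (if ((k : ℝ) + b) = 0 then 0 else ((((k : ℝ) + b : ℝ)) : ℂ) ^ (-(s - (j : ℕ)))) with hh
  set g : ℂ → ℂ := fun s => ∑ j ∈ Finset.range (m + 1),
    c j * (HurwitzZeta.hurwitzZeta (↑b) (s - (j : ℕ)) - h j s) with hg
  set p : ℂ := ((e + 3 : ℕ) : ℂ) - 2 with hp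
  have hpe : p = ((e : ℕ) : ℂ) + 1 := by rw [hp]; push_cast; ring
  -- differentiability of the correction terms
  have hhdiff : ∀ j : ℕ, Differentiable ℂ (h j) := by
    intro j
    apply Differentiable.fun_sum
    intro k _
    by_cases hk : ((k : ℝ) + b) = 0
    · simpa [hk] using differentiable_const (0 : ℂ)
    · simp only [if_neg hk]
      exact Differentiable.const_cpow (by fun_prop)
        (Or.inl (by exact_mod_cast Complex.ofReal_ne_zero.mpr hk))
  -- Step 1: series identity
  have key : ∀ s : ℂ, ((e + 3 : ℕ) : ℝ) < s.re → f s = g s := by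
    intro s hs
    have hterm : ∀ j ∈ Finset.range (m + 1), HasSum
        (fun n : ℕ => c j * (((n : ℂ) + (a : ℂ)) ^ (-(s - (j : ℕ)))))
        (c j * (HurwitzZeta.hurwitzZeta (↑b) (s - (j : ℕ)) - h j s)) := by
      intro j hj
      have hj' : j ≤ m := by simpa [Nat.lt_succ_iff] using hj
      have h1 : 1 < (s - (j : ℕ)).re := by
        have h2 : (j : ℝ) ≤ m := by exact_mod_cast hj'
        have h3 : ((e + 3 : ℕ) : ℝ) = (m : ℝ) + 1 := by push_cast [hm]; ring
        simp only [Complex.sub_re, Complex.natCast_re]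
        linarith
      have hsj0 : s - (j : ℕ) ≠ 0 := by
        intro hcon
        rw [hcon] at h1
        simp only [Complex.zero_re] at h1
        norm_num at h1
      have H1 := HurwitzZeta.hasSum_hurwitzZeta_of_one_lt_re hb h1
      have H2 := (hasSum_nat_add_iff'
        (f := fun n : ℕ => 1 / ((n : ℂ) + (b : ℝ)) ^ (s - (j : ℕ))) (g := _) N).mpr H1
      have Hfun : ∀ n : ℕ, (1 : ℂ) / (((n + N : ℕ) : ℂ) + (b : ℝ)) ^ (s - (j : ℕ))
          = ((n : ℂ) + (a : ℂ)) ^ (-(s - (j : ℕ))) := by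
        intro n
        have hcast : ((n + N : ℕ) : ℂ) + (b : ℝ) = (n : ℂ) + (a : ℂ) := by
          push_cast [← hNb]
          ring
        rw [hcast, Complex.cpow_neg, one_div]
      have Hsum : ∑ i ∈ Finset.range N, (1 : ℂ) / ((i : ℂ) + (b : ℝ)) ^ (s - (j : ℕ))
          = h j s := by
        rw [hh]
        refine Finset.sum_congr rfl fun i _ => ?_
        by_cases hib : ((i : ℝ) + b) = 0
        · have : ((i : ℂ) + (b : ℝ)) = 0 := by exact_mod_cast Complex.ofReal_eq_zero.mpr hib
          rw [this, if_pos hib, Complex.zero_cpow hsj0]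
          simp
        · rw [if_neg hib, Complex.cpow_neg, one_div]
          norm_cast
      have H3 : HasSum (fun n : ℕ => ((n : ℂ) + (a : ℂ)) ^ (-(s - (j : ℕ))))
          (HurwitzZeta.hurwitzZeta (↑b) (s - (j : ℕ)) - h j s) := by
        rw [← Hsum]
        exact H2.congr_fun fun n => (Hfun n).symm
      exact H3.mul_left (c j)
    have Hg : HasSum (fun n : ℕ => ∑ j ∈ Finset.range (m + 1),
        c j * (((n : ℂ) + (a : ℂ)) ^ (-(s - (j : ℕ))))) (g s) := hasSum_sum hterm
    have Hfg : (fun n : ℕ => ∑ j ∈ Finset.range (m + 1),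
          c j * (((n : ℂ) + (a : ℂ)) ^ (-(s - (j : ℕ)))))
        = fun n : ℕ => (((e + 3) + n - 1).choose n : ℂ) * ((n : ℂ) + (a : ℂ)) ^ (-s) := by
      funext n
      have hx0 : (n : ℂ) + (a : ℂ) ≠ 0 := by
        have : ((n : ℝ) + a : ℝ) ≠ 0 := by positivity
        exact_mod_cast Complex.ofReal_ne_zero.mpr this
      have hxj : ∀ j : ℕ, ((n : ℂ) + (a : ℂ)) ^ (-(s - (j : ℕ)))
          = ((n : ℂ) + (a : ℂ)) ^ (j : ℕ) * ((n : ℂ) + (a : ℂ)) ^ (-s) := by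
        intro j
        rw [show -(s - (j : ℕ)) = ((j : ℕ) : ℂ) + (-s) by ring,
          Complex.cpow_add _ _ hx0, Complex.cpow_natCast]
      simp_rw [hxj, ← mul_assoc, ← Finset.sum_mul]
      congr 1
      have heval := Polynomial.eval_eq_sum_range'
        (p := Q a m) (n := m + 1) (by rw [Q_natDegree]; omega) ((n : ℂ) + (a : ℂ))
      have hsum1 : ∑ j ∈ Finset.range (m + 1), c j * ((n : ℂ) + (a : ℂ)) ^ j
          = (Q a m).eval ((n : ℂ) + (a : ℂ)) / ((m.factorial : ℕ) : ℂ) := by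
        rw [heval, Finset.sum_div]
        refine Finset.sum_congr rfl fun j _ => ?_
        rw [hc]
        ring
      rw [hsum1, Q_eval]
      have hprod : ∏ i ∈ Finset.range m, ((n : ℂ) + (a : ℂ) + ((i : ℂ) + 1 - (a : ℂ)))
          = ∏ i ∈ Finset.range m, (((n + 1 + i : ℕ) : ℂ)) := by
        refine Finset.prod_congr rfl fun i _ => ?_
        push_cast
        ring
      have hchoose := choose_prod (e + 3) n (by omega)
      have hm3 : e + 3 - 1 = m := by omega
      rw [hm3] at hchoose
      have hcast : (((e + 3) + n - 1).choose n : ℂ) * ((m.factorial : ℕ) : ℂ)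
          = ∏ i ∈ Finset.range m, (((n + 1 + i : ℕ) : ℂ)) := by
        rw [← Nat.cast_prod, ← hchoose]
        push_cast
        ring
      rw [hprod, ← hcast]
      have hfac : ((m.factorial : ℕ) : ℂ) ≠ 0 := by
        exact_mod_cast Nat.cast_ne_zero.mpr m.factorial_ne_zero
      field_simp
    exact (hsum s hs).unique (Hfg ▸ Hg)
  -- Step 2: identity theorem
  have hEqOn : ∀ s : ℂ, (∀ k : ℕ, 1 ≤ k → k ≤ e + 3 → s ≠ (k : ℂ)) → f s = g s := by
    have hFfin : ((fun k : ℕ => (k : ℂ)) '' (Set.Icc 1 (e + 3))).Finite :=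
      (Set.finite_Icc 1 (e + 3)).image _
    set F : Set ℂ := (fun k : ℕ => (k : ℂ)) '' (Set.Icc 1 (e + 3)) with hF
    have hmemU : ∀ s : ℂ, s ∈ Fᶜ ↔ ∀ k : ℕ, 1 ≤ k → k ≤ e + 3 → s ≠ (k : ℂ) := by
      intro s
      simp only [hF, Set.mem_compl_iff, Set.mem_image, Set.mem_Icc, not_exists]
      constructor
      · intro hs k h1 h2 hks
        exact hs k ⟨⟨h1, h2⟩, hks.symm⟩
      · rintro hs k ⟨⟨h1, h2⟩, hks⟩
        exact hs k h1 h2 hks.symm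
    have hUopen : IsOpen Fᶜ := hFfin.isClosed.isOpen_compl
    have hUconn : IsPreconnected Fᶜ :=
      (hFfin.countable.isConnected_compl_of_one_lt_rank
        (by rw [Complex.rank_real_complex]; exact Cardinal.one_lt_two)).isPreconnected
    have hganal : AnalyticOnNhd ℂ g Fᶜ := by
      refine DifferentiableOn.analyticOnNhd ?_ hUopen
      intro s hsU
      refine DifferentiableAt.differentiableWithinAt ?_
      rw [hg]
      refine DifferentiableAt.fun_sum fun j hj => ?_
      refine DifferentiableAt.const_mul ?_ _
      refine DifferentiableAt.sub ?_ ((hhdiff j).differentiableAt)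
      have hne : s - (j : ℕ) ≠ 1 := by
        intro hcon
        have hj' : j + 1 ≤ e + 3 := by
          have := Finset.mem_range.mp hj
          omega
        refine (hmemU s).mp hsU (j + 1) (by omega) hj' ?_
        have : s = 1 + (j : ℕ) := by linear_combination hcon
        rw [this]
        push_cast
        ring
      exact (HurwitzZeta.differentiableAt_hurwitzZeta _ hne).comp s
        (differentiableAt_id.sub_const _)
    have hfanal : AnalyticOnNhd ℂ f Fᶜ := fun s hs => hanal s ((hmemU s).mp hs)
    have hz0 : ((e + 4 : ℕ) : ℂ) ∈ Fᶜ := by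
      rw [hmemU]
      intro k h1 h2 hk
      have : (e + 4 : ℕ) = k := by exact_mod_cast hk
      omega
    have heq : f =ᶠ[𝓝 ((e + 4 : ℕ) : ℂ)] g := by
      have hopen2 : IsOpen {s : ℂ | ((e + 3 : ℕ) : ℝ) < s.re} :=
        isOpen_lt continuous_const Complex.continuous_re
      refine eventuallyEq_of_mem (hopen2.mem_nhds ?_) fun s hs => key s hs
      simp only [Set.mem_setOf_eq, Complex.natCast_re]
      exact_mod_cast Nat.lt_succ_self (e + 3)
    intro s hs
    exact hfanal.eqOn_of_preconnected_of_eventuallyEq hganal hUconn hz0 heq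
      ((hmemU s).mpr hs)
  -- Step 3: eventual equality near p
  have hev : ∀ᶠ s in 𝓝[≠] p, (s - p) * g s = (s - p) * f s := by
    have hFfin : (((fun k : ℕ => (k : ℂ)) '' (Set.Icc 1 (e + 3))) \ {p}).Finite :=
      ((Set.finite_Icc 1 (e + 3)).image _).subset Set.diff_subset
    have hVopen : IsOpen ((((fun k : ℕ => (k : ℂ)) '' (Set.Icc 1 (e + 3))) \ {p})ᶜ) :=
      hFfin.isClosed.isOpen_compl
    have hpV : p ∈ (((fun k : ℕ => (k : ℂ)) '' (Set.Icc 1 (e + 3))) \ {p})ᶜ := by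
      simp
    filter_upwards [nhdsWithin_le_nhds (hVopen.mem_nhds hpV), self_mem_nhdsWithin]
      with s hs1 hs2
    have hsU : ∀ k : ℕ, 1 ≤ k → k ≤ e + 3 → s ≠ (k : ℂ) := by
      intro k h1 h2 hks
      exact hs1 ⟨⟨k, Set.mem_Icc.mpr ⟨h1, h2⟩, hks.symm⟩, hs2⟩
    rw [hEqOn s hsU]
  -- Step 4: the limit for g
  have hlim : Tendsto (fun s : ℂ => (s - p) * g s) (𝓝[≠] p) (𝓝 (c e)) := by
    have hsplit : (fun s : ℂ => (s - p) * g s) = fun s : ℂ => ∑ j ∈ Finset.range (m + 1),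
        (c j * ((s - p) * HurwitzZeta.hurwitzZeta (↑b) (s - (j : ℕ)))
          - c j * ((s - p) * h j s)) := by
      funext s
      rw [hg, Finset.mul_sum]
      refine Finset.sum_congr rfl fun j _ => ?_
      ring
    have hsumval : ∑ j ∈ Finset.range (m + 1), (if j = e then c e else 0) = c e := by
      rw [Finset.sum_ite_eq' (Finset.range (m + 1)) e (fun _ => c e)]
      rw [if_pos (Finset.mem_range.mpr (by omega))]
    rw [hsplit, ← hsumval]
    refine tendsto_finset_sum _ fun j hj => ?_
    have hbase : Tendsto (fun s : ℂ => s - p) (𝓝 p) (𝓝 0) := by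
      simpa using (continuous_sub_right p).tendsto p
    have hT2 : Tendsto (fun s : ℂ => (s - p) * h j s) (𝓝[≠] p) (𝓝 0) := by
      have := (hbase.mul ((hhdiff j).continuous.tendsto p)).mono_left
        (nhdsWithin_le_nhds (a := p) (s := {p}ᶜ))
      simpa using this
    rcases eq_or_ne j e with rfl | hje
    · -- the pole term
      have hmap : Tendsto (fun s : ℂ => s - ((j : ℕ) : ℂ)) (𝓝[≠] p) (𝓝[≠] (1 : ℂ)) := by
        refine tendsto_nhdsWithin_of_tendsto_nhds_of_eventually_within _ ?_ ?_
        · have h1 : Tendsto (fun s : ℂ => s - ((j : ℕ) : ℂ)) (𝓝 p) (𝓝 (p - ((j : ℕ) : ℂ))) :=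
            (continuous_sub_right _).tendsto p
          have h2 : p - ((j : ℕ) : ℂ) = 1 := by rw [hpe]; ring
          rw [h2] at h1
          exact h1.mono_left nhdsWithin_le_nhds
        · filter_upwards [self_mem_nhdsWithin] with s hs
          intro hcon
          have hconeq : s - ((j : ℕ) : ℂ) = 1 := hcon
          have hsp : s = p := by rw [hpe]; linear_combination hconeq
          exact hs hsp
      have hres := (HurwitzZeta.hurwitzZeta_residue_one (↑b)).comp hmap
      have hfun2 : (fun s : ℂ => (s - ((j : ℕ) : ℂ) - 1) *
            HurwitzZeta.hurwitzZeta (↑b) (s - ((j : ℕ) : ℂ)))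
          = fun s : ℂ => (s - p) * HurwitzZeta.hurwitzZeta (↑b) (s - ((j : ℕ) : ℂ)) := by
        funext s
        rw [hpe]
        ring
      have hT1 : Tendsto (fun s : ℂ => (s - p) * HurwitzZeta.hurwitzZeta (↑b) (s - ((j : ℕ) : ℂ)))
          (𝓝[≠] p) (𝓝 1) := by
        rw [← hfun2]
        exact hres
      rw [if_pos rfl]
      have := (hT1.const_mul (c j)).sub (hT2.const_mul (c j))
      simpa using this
    · -- regular terms
      have hne : p - ((j : ℕ) : ℂ) ≠ 1 := by
        rw [hpe]
        intro hcon
        have : ((e : ℕ) : ℂ) = ((j : ℕ) : ℂ) := by linear_combination hcon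
        exact hje.symm (by exact_mod_cast this)
      have hcont : ContinuousAt (fun s : ℂ => HurwitzZeta.hurwitzZeta (↑b) (s - ((j : ℕ) : ℂ))) p :=
        ContinuousAt.comp (g := HurwitzZeta.hurwitzZeta (↑b)) (f := fun s : ℂ => s - ((j : ℕ) : ℂ))
          (HurwitzZeta.differentiableAt_hurwitzZeta _ hne).continuousAt
          (by fun_prop)
      have hT1 : Tendsto (fun s : ℂ => (s - p) * HurwitzZeta.hurwitzZeta (↑b) (s - ((j : ℕ) : ℂ)))
          (𝓝[≠] p) (𝓝 0) := by
        have := (hbase.mul hcont).mono_left (nhdsWithin_le_nhds (a := p) (s := {p}ᶜ))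
        simpa using this
      rw [if_neg hje]
      have := (hT1.const_mul (c j)).sub (hT2.const_mul (c j))
      simpa using this
  -- Step 5: final value
  have hce : c e = (12 * (a : ℂ) ^ 2 - ((e + 3 : ℕ) : ℂ) - 12 * (a : ℂ) * ((e + 3 : ℕ) : ℂ) +
      3 * ((e + 3 : ℕ) : ℂ) ^ 2) / (24 * (((e + 3 - 3 : ℕ)).factorial : ℂ)) := by
    have h33 : e + 3 - 3 = e := by omega
    simp only [hc, h33]
    have hcoeff : (Q a m).coeff e = E2 a (e + 2) := Q_coeff_sub_two a e
    rw [hm] at hcoeff ⊢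
    rw [hcoeff, E2]
    have hfac : ((e + 2).factorial : ℂ) = ((e : ℂ) + 2) * ((e : ℂ) + 1) * (e.factorial : ℂ) := by
      rw [show e + 2 = (e + 1) + 1 by ring, Nat.factorial_succ, Nat.factorial_succ]
      push_cast
      ring
    rw [hfac]
    have hfe : (e.factorial : ℂ) ≠ 0 := Nat.cast_ne_zero.mpr e.factorial_ne_zero
    have he1 : ((e : ℂ) + 1) ≠ 0 := by
      intro hcon
      have : ((e + 1 : ℕ) : ℂ) = 0 := by push_cast; linear_combination hcon
      exact Nat.cast_ne_zero.mpr (by omega) this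
    have he2 : ((e : ℂ) + 2) ≠ 0 := by
      intro hcon
      have : ((e + 2 : ℕ) : ℂ) = 0 := by push_cast; linear_combination hcon
      exact Nat.cast_ne_zero.mpr (by omega) this
    push_cast
    field_simp
    ring
  rw [← hce]
  exact hlim.congr' hev
end

section
/- For Re(s) strictly between 1/2 and 1, p > 0, and l > 0, the integral ∫_{ε/p}^∞ dz [(zp)² - ε²]^{-s} (d/dz)(1+z²)^{-l/2} equals -(l/2)·(Γ(s+l/2)Γ(1-s)/Γ(1+l/2))·p^l·(ε² + p²)^{-s-l/2}, where t = 1/√(1+z²) so that t^l = (1+z²)^{-l/2}. -/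
open MeasureTheory

private lemma ofReal_cpow_exp {x : ℝ} (hx : 0 < x) (w : ℂ) :
    ((x : ℝ) : ℂ) ^ w = Complex.exp (w * Real.log x) := by
  rw [Complex.cpow_def_of_ne_zero (by exact_mod_cast hx.ne'), ← Complex.ofReal_log hx.le,
    mul_comm]

/-- For 1/2 < Re s < 1, ε, p, l > 0,
∫_{ε/p}^∞ [(zp)²-ε²]^{-s} d/dz[(1+z²)^{-l/2}] dz
  = -(l/2)·(Γ(s+l/2)Γ(1-s)/Γ(1+l/2))·p^l·(ε²+p²)^{-s-l/2}. -/
theorem key_integral_identity (ε p l : ℝ) (s : ℂ)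
    (hε : 0 < ε) (hp : 0 < p) (hl : 0 < l)
    (hs1 : 1 / 2 < s.re) (hs2 : s.re < 1) :
    ∫ z in Set.Ioi (ε / p),
        (((z * p) ^ 2 - ε ^ 2 : ℝ) : ℂ) ^ (-s) *
          ((deriv (fun w : ℝ => (1 + w ^ 2) ^ (-l / 2)) z : ℝ) : ℂ)
      = -((l : ℂ) / 2) *
          (Complex.Gamma (s + (l : ℂ) / 2) * Complex.Gamma (1 - s) /
            Complex.Gamma (1 + (l : ℂ) / 2)) *
          ((p ^ l : ℝ) : ℂ) * ((ε ^ 2 + p ^ 2 : ℝ) : ℂ) ^ (-s - (l : ℂ) / 2) := by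
  set a : ℝ := ε / p with ha_def
  have ha : 0 < a := div_pos hε hp
  have hp2 : (0:ℝ) < p ^ 2 := by positivity
  have hC : (0:ℝ) < 1 + a ^ 2 := by positivity
  -- the derivative of the weight function
  have hderiv : ∀ z : ℝ, deriv (fun w : ℝ => (1 + w ^ 2) ^ (-l / 2)) z
      = (2 * z) * (-l / 2) * (1 + z ^ 2) ^ (-l / 2 - 1) := by
    intro z
    have h1 : HasDerivAt (fun w : ℝ => 1 + w ^ 2) (2 * z) z := by
      simpa using ((hasDerivAt_pow 2 z).const_add 1)
    have h2 := h1.rpow_const (p := -l / 2) (Or.inl (by positivity))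
    exact h2.deriv
  -- the substitution function and its derivative
  set f : ℝ → ℝ := fun z => (z ^ 2 - a ^ 2) / (1 + z ^ 2) with hf_def
  set f' : ℝ → ℝ := fun z => 2 * z * (1 + a ^ 2) / (1 + z ^ 2) ^ 2 with hf'_def
  have hf_deriv : ∀ z : ℝ, HasDerivAt f (f' z) z := by
    intro z
    have hB : (1:ℝ) + z ^ 2 ≠ 0 := by positivity
    have h1 : HasDerivAt (fun z : ℝ => z ^ 2 - a ^ 2) (2 * z) z := by
      simpa using ((hasDerivAt_pow 2 z).sub_const (a ^ 2))
    have h2 : HasDerivAt (fun z : ℝ => 1 + z ^ 2) (2 * z) z := by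
      simpa using ((hasDerivAt_pow 2 z).const_add 1)
    have h3 := h1.div h2 hB
    refine HasDerivAt.congr_deriv (f := f) h3 ?_
    show _ = 2 * z * (1 + a ^ 2) / (1 + z ^ 2) ^ 2
    rw [div_eq_div_iff (by positivity) (by positivity)]
    ring
  have hf_inj : Set.InjOn f (Set.Ioi a) := by
    intro x hx y hy hxy
    have hx0 : 0 < x := ha.trans hx
    have hy0 : 0 < y := ha.trans hy
    have hBx : (0:ℝ) < 1 + x ^ 2 := by positivity
    have hBy : (0:ℝ) < 1 + y ^ 2 := by positivity
    simp only [hf_def, div_eq_div_iff hBx.ne' hBy.ne'] at hxy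
    have h2 : x ^ 2 * (1 + a ^ 2) = y ^ 2 * (1 + a ^ 2) := by linear_combination hxy
    have h3 : x ^ 2 = y ^ 2 := mul_right_cancel₀ hC.ne' h2
    rcases lt_trichotomy x y with h | h | h
    · nlinarith [mul_pos (sub_pos.mpr h) (add_pos hy0 hx0)]
    · exact h
    · nlinarith [mul_pos (sub_pos.mpr h) (add_pos hy0 hx0)]
  have hf_image : f '' Set.Ioi a = Set.Ioo 0 1 := by
    ext t
    constructor
    · rintro ⟨z, hz, rfl⟩
      have hz' : a < z := hz
      have hA : (0:ℝ) < z ^ 2 - a ^ 2 := by nlinarith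
      have hB : (0:ℝ) < 1 + z ^ 2 := by positivity
      exact ⟨div_pos hA hB, (div_lt_one hB).2 (by nlinarith)⟩
    · rintro ⟨ht0, ht1⟩
      have h1t : (0:ℝ) < 1 - t := by linarith
      have hq : (0:ℝ) < (a ^ 2 + t) / (1 - t) := by positivity
      refine ⟨Real.sqrt ((a ^ 2 + t) / (1 - t)), ?_, ?_⟩
      · have h1 : a ^ 2 < (a ^ 2 + t) / (1 - t) := by
          rw [lt_div_iff₀ h1t]; nlinarith
        calc a = Real.sqrt (a ^ 2) := (Real.sqrt_sq ha.le).symm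
        _ < Real.sqrt ((a ^ 2 + t) / (1 - t)) := Real.sqrt_lt_sqrt (by positivity) h1
      · have hz2 : Real.sqrt ((a ^ 2 + t) / (1 - t)) ^ 2 = (a ^ 2 + t) / (1 - t) :=
          Real.sq_sqrt hq.le
        simp only [hf_def, hz2]
        rw [div_eq_iff (by positivity)]
        field_simp
        ring
  -- change of variables
  have key := MeasureTheory.integral_image_eq_integral_abs_deriv_smul measurableSet_Ioi
      (fun z _ => (hf_deriv z).hasDerivWithinAt) hf_inj
      (fun t : ℝ => ((t : ℝ) : ℂ) ^ (-s) * ((1 - t : ℝ) : ℂ) ^ (s + (l : ℂ) / 2 - 1))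
  rw [hf_image] at key
  simp only [Complex.real_smul] at key
  -- the value of the beta integral
  have hre2 : (s + (l : ℂ) / 2).re = s.re + l / 2 := by
    rw [show ((l : ℂ) / 2) = ((l / 2 : ℝ) : ℂ) by push_cast; ring]
    simp
  have hres : (0:ℝ) < (s + (l : ℂ) / 2).re := by rw [hre2]; positivity
  have hres1 : (0:ℝ) < (1 - s).re := by simp [Complex.sub_re]; linarith
  have hresG : (0:ℝ) < (1 + (l : ℂ) / 2).re := by
    rw [show ((1:ℂ) + (l : ℂ) / 2) = ((1 + l / 2 : ℝ) : ℂ) by push_cast; ring]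
    simp; positivity
  -- beta integral value
  have hβ := Complex.Gamma_mul_Gamma_eq_betaIntegral hres1 hres
  rw [show (1 - s) + (s + (l : ℂ) / 2) = 1 + (l : ℂ) / 2 by ring] at hβ
  have hΓ : Complex.Gamma (1 + (l : ℂ) / 2) ≠ 0 := Complex.Gamma_ne_zero_of_re_pos hresG
  have hbval : Complex.betaIntegral (1 - s) (s + (l : ℂ) / 2)
      = Complex.Gamma (1 - s) * Complex.Gamma (s + (l : ℂ) / 2) /
        Complex.Gamma (1 + (l : ℂ) / 2) := by
    rw [eq_div_iff hΓ]; linear_combination -hβ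
  have hioo : Complex.betaIntegral (1 - s) (s + (l : ℂ) / 2)
      = ∫ t in Set.Ioo (0:ℝ) 1, (t : ℂ) ^ (-s) * ((1 - t : ℝ) : ℂ) ^ (s + (l : ℂ) / 2 - 1) := by
    rw [Complex.betaIntegral, intervalIntegral.integral_of_le zero_le_one,
      MeasureTheory.integral_Ioc_eq_integral_Ioo]
    refine setIntegral_congr_fun measurableSet_Ioo fun t ht => ?_
    rw [show (1 : ℂ) - s - 1 = -s by ring]
    push_cast
    ring
  -- the pointwise identity
  have hpoint : ∀ z ∈ Set.Ioi a,
      (((z * p) ^ 2 - ε ^ 2 : ℝ) : ℂ) ^ (-s) *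
        ((deriv (fun w : ℝ => (1 + w ^ 2) ^ (-l / 2)) z : ℝ) : ℂ)
      = (-((l : ℂ) / 2) * Complex.exp (-s * (Real.log (p ^ 2) : ℂ)
            - (s + (l : ℂ) / 2) * (Real.log (1 + a ^ 2) : ℂ))) *
          (((|f' z| : ℝ) : ℂ) * (((f z : ℝ) : ℂ) ^ (-s) *
            ((1 - f z : ℝ) : ℂ) ^ (s + (l : ℂ) / 2 - 1))) := by
    intro z hz
    have hz' : a < z := hz
    have hz0 : 0 < z := ha.trans hz'
    have hA : (0:ℝ) < z ^ 2 - a ^ 2 := by nlinarith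
    have hB : (0:ℝ) < 1 + z ^ 2 := by positivity
    rw [hderiv z]
    simp only [hf_def, hf'_def]
    have e1 : ((z * p) ^ 2 - ε ^ 2 : ℝ) = p ^ 2 * (z ^ 2 - a ^ 2) := by
      rw [ha_def]; field_simp
    have e2 : (1:ℝ) - (z ^ 2 - a ^ 2) / (1 + z ^ 2) = (1 + a ^ 2) / (1 + z ^ 2) := by
      field_simp; ring
    have e3 : |2 * z * (1 + a ^ 2) / (1 + z ^ 2) ^ 2| = 2 * z * (1 + a ^ 2) / (1 + z ^ 2) ^ 2 :=
      abs_of_pos (by positivity)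
    rw [e1, e2, e3]
    rw [ofReal_cpow_exp (mul_pos hp2 hA), ofReal_cpow_exp (div_pos hA hB),
      ofReal_cpow_exp (div_pos hC hB)]
    rw [Real.log_mul hp2.ne' hA.ne', Real.log_div hA.ne' hB.ne', Real.log_div hC.ne' hB.ne']
    rw [show ((1 + z ^ 2 : ℝ)) ^ (-l / 2 - 1) = Real.exp (Real.log (1 + z ^ 2) * (-l / 2 - 1))
      from Real.rpow_def_of_pos hB _]
    rw [show 2 * z * (1 + a ^ 2) / (1 + z ^ 2) ^ 2
        = 2 * z * Real.exp (Real.log (1 + a ^ 2) - 2 * Real.log (1 + z ^ 2)) by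
      rw [Real.exp_sub, Real.exp_log hC,
        show (2:ℝ) * Real.log (1 + z ^ 2) = Real.log ((1 + z ^ 2) ^ 2) by
          rw [Real.log_pow]; norm_num,
        Real.exp_log (by positivity)]
      ring]
    push_cast
    set LP : ℂ := (Real.log (p ^ 2) : ℂ) with hLP
    set LA : ℂ := (Real.log (z ^ 2 - a ^ 2) : ℂ) with hLA
    set LB : ℂ := (Real.log (1 + z ^ 2) : ℂ) with hLB
    set LC : ℂ := (Real.log (1 + a ^ 2) : ℂ) with hLC
    trans ((-(l : ℂ)) * z * Complex.exp (-s * (LP + LA) + LB * (-(l:ℂ) / 2 - 1)))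
    · rw [Complex.exp_add]; ring
    · rw [show -s * (LP + LA) + LB * (-(l:ℂ) / 2 - 1)
          = (-s * LP - (s + (l:ℂ) / 2) * LC) +
            ((LC - 2 * LB) + (-s * (LA - LB) + (s + (l:ℂ) / 2 - 1) * (LC - LB))) by ring,
        Complex.exp_add, Complex.exp_add, Complex.exp_add]
      ring
  rw [setIntegral_congr_fun measurableSet_Ioi hpoint, integral_const_mul, ← key, ← hioo, hbval]
  rw [ofReal_cpow_exp (show (0:ℝ) < ε ^ 2 + p ^ 2 by positivity),
    show ((p ^ l : ℝ) : ℂ) = Complex.exp ((Real.log p : ℂ) * (l : ℂ)) by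
      rw [Real.rpow_def_of_pos hp, Complex.ofReal_exp, Complex.ofReal_mul],
    show (1:ℝ) + a ^ 2 = (ε ^ 2 + p ^ 2) / p ^ 2 by rw [ha_def]; field_simp; ring,
    Real.log_div (by positivity) hp2.ne',
    show Real.log (p ^ 2) = 2 * Real.log p by rw [Real.log_pow]; norm_num]
  push_cast
  set Lp : ℂ := (Real.log p : ℂ) with hLp
  set LE : ℂ := (Real.log (ε ^ 2 + p ^ 2) : ℂ) with hLE
  rw [show -s * (2 * Lp) - (s + (l:ℂ) / 2) * (LE - 2 * Lp)
      = Lp * (l:ℂ) + (-s - (l:ℂ) / 2) * LE by ring, Complex.exp_add]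
  ring
end

section
/- Schafheitlin's reduction formula: for the Bessel function J_ν, (j+2)∫^z x^{j+2} J_ν(x)² dx = (j+1)(ν² - (j+1)²/4)∫^z x^j J_ν(x)² dx + (1/2)[z^{j+1}(z J_ν'(z) - (j+1)J_ν(z)/2)² + z^{j+1}(z² - ν² + (j+1)²/4) J_ν(z)²], where the integrals denote antiderivatives (indefinite integrals agreeing up to constants). -/
/-- Schafheitlin's reduction formula: if J satisfies the Bessel equation
x²J'' + xJ' + (x²-ν²)J = 0, then the derivative in z of
(1/2)[z^{j+1}(zJ'(z) - (j+1)J(z)/2)² + z^{j+1}(z² - ν² + (j+1)²/4)J(z)²]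
equals (j+2)z^{j+2}J(z)² - (j+1)(ν² - (j+1)²/4)z^j J(z)², for z > 0. -/
theorem schafheitlin_reduction (ν j : ℝ) (J : ℝ → ℝ) (hJ : ContDiff ℝ 2 J)
    (hode : ∀ x : ℝ, x ^ 2 * deriv (deriv J) x + x * deriv J x + (x ^ 2 - ν ^ 2) * J x = 0)
    (hj : j + 2 ≠ 0) (z : ℝ) (hz : 0 < z) :
    deriv (fun w : ℝ =>
        (1 / 2) * (w ^ (j + 1) * (w * deriv J w - (j + 1) * J w / 2) ^ 2 +
          w ^ (j + 1) * (w ^ 2 - ν ^ 2 + (j + 1) ^ 2 / 4) * (J w) ^ 2)) z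
      = (j + 2) * z ^ (j + 2) * (J z) ^ 2 -
        (j + 1) * (ν ^ 2 - (j + 1) ^ 2 / 4) * z ^ j * (J z) ^ 2 := by
  have hz0 : z ≠ 0 := hz.ne'
  have hJ1 : HasDerivAt J (deriv J z) z := by
    exact ((hJ.differentiable (by norm_num)).differentiableAt).hasDerivAt
  have hJd : ContDiff ℝ 1 (deriv J) := (contDiff_succ_iff_deriv.mp (by exact_mod_cast hJ : ContDiff ℝ (1+1) J)).2.2
  have hJ2 : HasDerivAt (deriv J) (deriv (deriv J) z) z := by
    exact ((hJd.differentiable (by norm_num)).differentiableAt).hasDerivAt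
  have hpow : HasDerivAt (fun w : ℝ => w ^ (j + 1)) ((j + 1) * z ^ j) z := by
    have := Real.hasDerivAt_rpow_const (x := z) (p := j + 1) (Or.inl hz0)
    simpa using this
  have hA : HasDerivAt (fun w : ℝ => w * deriv J w - (j + 1) * J w / 2)
      (1 * deriv J z + z * deriv (deriv J) z - (j + 1) * deriv J z / 2) z :=
    ((hasDerivAt_id z).mul hJ2).sub ((hJ1.const_mul (j + 1)).div_const 2)
  have hA2 := hA.pow 2
  have hB : HasDerivAt (fun w : ℝ => w ^ 2 - ν ^ 2 + (j + 1) ^ 2 / 4)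
      (2 * z ^ 1) z := ((hasDerivAt_pow 2 z).sub_const _).add_const _
  have hJsq := hJ1.pow 2
  have hfull := (((hpow.mul hA2).add ((hpow.mul hB).mul hJsq)).const_mul (1 / 2 : ℝ))
  erw [hfull.deriv]
  simp only [Pi.mul_apply, Pi.pow_apply]
  push_cast
  have hr1 : z ^ (j + 1) = z ^ j * z := by
    rw [Real.rpow_add hz, Real.rpow_one]
  have hr2 : z ^ (j + 2) = z ^ j * z ^ 2 := by
    rw [Real.rpow_add hz, Real.rpow_two]
  rw [hr1, hr2]
  linear_combination (z ^ j * (z * deriv J z - (j + 1) * J z / 2)) * hode z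
end
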